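/- Assume t₀^θ ≥ a(C² + b) and r^α ∈ H. Then for all t ∈ ℕ, the deterministic sequence g_t satisfies ‖L_K g_{t−1}‖²_H ≤ C²/α². -/

import Mathlib

open MeasureTheory Real ContinuousLinearMap
open scoped ENNReal RealInnerProductSpace

noncomputable section

private lemma contract_aux_g {H : Type*} [NormedAddCommGroup H] [InnerProductSpace ℝ H]
    (L : H →L[ℝ] H) (C : ℝ) (hC : 0 < C)
    (hA : ∀ v : H, ‖L v‖ ^ 2 ≤ C ^ 2 * ⟪v, L v⟫) (e l : ℝ) (he : 0 < e)
    (h1 : e * C ^ 2 + e * l ≤ 1) (u : H) :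
    ‖u - e • (L u + l • u)‖ ≤ (1 - e * l) * ‖u‖ := by
  have hpos : 0 ≤ ⟪u, L u⟫ := by
    nlinarith [hA u, sq_nonneg ‖L u‖, pow_pos hC 2]
  have hc : 0 ≤ 1 - e * l := by nlinarith [mul_nonneg he.le (sq_nonneg C)]
  have heC : e * C ^ 2 ≤ 1 - e * l := by linarith
  have hw : u - e • (L u + l • u) = (1 - e * l) • u - e • L u := by module
  rw [hw]
  have hsq : ‖(1 - e * l) • u - e • L u‖ ^ 2
      = (1 - e * l) ^ 2 * ‖u‖ ^ 2 - 2 * ((1 - e * l) * e) * ⟪u, L u⟫ + e ^ 2 * ‖L u‖ ^ 2 := by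
    rw [norm_sub_sq_real, real_inner_smul_left, real_inner_smul_right, norm_smul, norm_smul]
    simp only [Real.norm_eq_abs, abs_of_nonneg hc, abs_of_pos he]
    ring
  have h3 : e ^ 2 * ‖L u‖ ^ 2 ≤ 2 * ((1 - e * l) * e) * ⟪u, L u⟫ := by
    nlinarith [mul_le_mul_of_nonneg_left (hA u) (sq_nonneg e),
      mul_le_mul_of_nonneg_right heC hpos, he.le]
  have h4 : ‖(1 - e * l) • u - e • L u‖ ^ 2 ≤ ((1 - e * l) * ‖u‖) ^ 2 := by
    rw [hsq]; nlinarith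
  have h5 : 0 ≤ (1 - e * l) * ‖u‖ := mul_nonneg hc (norm_nonneg u)
  nlinarith [norm_nonneg ((1 - e * l) • u - e • L u)]

private lemma keyA_aux_g {X : Type*} [MeasurableSpace X]
    {H : Type*} [NormedAddCommGroup H] [InnerProductSpace ℝ H] [CompleteSpace H]
    (μ : Measure X) [IsProbabilityMeasure μ]
    (k : X → H) (C : ℝ) (hC : ∀ x : X, ‖k x‖ ≤ C)
    (LK : H →L[ℝ] H) (hLK : ∀ f : H, LK f = ∫ y, ⟪f, k y⟫ • k y ∂μ) (v : H) :
    ‖LK v‖ ^ 2 ≤ C ^ 2 * ⟪v, LK v⟫ := by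
  by_cases hInt : Integrable (fun y => ⟪v, k y⟫ • k y) μ
  · set f : X → ℝ := fun y => ⟪v, k y⟫ with hf
    have hsq_eq : ∀ y, ⟪v, f y • k y⟫ = f y ^ 2 := by
      intro y; rw [real_inner_smul_right]; ring
    have hGm : AEStronglyMeasurable (fun y => f y • k y) μ := hInt.1
    have hf2m : AEStronglyMeasurable (fun y => f y ^ 2) μ := by
      have h := ((innerSL ℝ v).continuous.comp_aestronglyMeasurable hGm)
      simp only [innerSL_apply_apply, hsq_eq] at h
      exact h
    have habsm : AEStronglyMeasurable (fun y => |f y|) μ := by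
      have h := Real.continuous_sqrt.comp_aestronglyMeasurable hf2m
      simp only [Function.comp, Real.sqrt_sq_eq_abs] at h
      exact h
    have hbound : ∀ y, |f y| ≤ ‖v‖ * C := fun y =>
      (abs_real_inner_le_norm v (k y)).trans
        (mul_le_mul_of_nonneg_left (hC y) (norm_nonneg v))
    have habsint : Integrable (fun y => |f y|) μ := by
      refine Integrable.mono' (integrable_const (‖v‖ * C)) habsm ?_
      filter_upwards with y
      rw [Real.norm_eq_abs, abs_abs]; exact hbound y
    have hf2int : Integrable (fun y => f y ^ 2) μ := by
      refine Integrable.mono' (integrable_const ((‖v‖ * C) ^ 2)) hf2m ?_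
      filter_upwards with y
      rw [Real.norm_eq_abs, abs_pow]
      exact pow_le_pow_left₀ (abs_nonneg _) (hbound y) 2
    have hquad : ⟪v, LK v⟫ = ∫ y, f y ^ 2 ∂μ := by
      have h := ContinuousLinearMap.integral_comp_comm (innerSL ℝ v) hInt
      simp only [innerSL_apply_apply, hsq_eq] at h
      rw [hLK]; exact h.symm.trans (integral_congr_ae (Filter.Eventually.of_forall hsq_eq))
    set m := ∫ y, |f y| ∂μ with hm
    have hm0 : 0 ≤ m := integral_nonneg fun y => abs_nonneg _
    have hnorm : ‖LK v‖ ≤ C * m := by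
      rw [hLK]
      calc ‖∫ y, f y • k y ∂μ‖ ≤ ∫ y, ‖f y • k y‖ ∂μ := norm_integral_le_integral_norm _
        _ ≤ ∫ y, C * |f y| ∂μ := by
            refine integral_mono hInt.norm (habsint.const_mul C) fun y => ?_
            rw [norm_smul, Real.norm_eq_abs, mul_comm]
            exact mul_le_mul_of_nonneg_right (hC y) (abs_nonneg _)
        _ = C * m := integral_const_mul C _
    have hm2 : m ^ 2 ≤ ∫ y, f y ^ 2 ∂μ := by
      have h0 : 0 ≤ ∫ y, (|f y| - m) ^ 2 ∂μ := integral_nonneg fun y => sq_nonneg _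
      have hexp : ∫ y, (|f y| - m) ^ 2 ∂μ = (∫ y, f y ^ 2 ∂μ) - m ^ 2 := by
        have hpt : ∀ y, (|f y| - m) ^ 2 = f y ^ 2 - (2 * m) * |f y| + m ^ 2 := by
          intro y; rw [sub_sq, sq_abs]; ring
        simp_rw [hpt]
        have hint1 : Integrable (fun y => f y ^ 2 - 2 * m * |f y|) μ :=
          hf2int.sub (habsint.const_mul _)
        rw [integral_add hint1 (integrable_const _),
          integral_sub hf2int (habsint.const_mul _), integral_const_mul, integral_const]
        simp [measure_univ]
        ring
      linarith
    calc ‖LK v‖ ^ 2 ≤ (C * m) ^ 2 := pow_le_pow_left₀ (norm_nonneg _) hnorm 2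
      _ = C ^ 2 * m ^ 2 := by ring
      _ ≤ C ^ 2 * ∫ y, f y ^ 2 ∂μ := mul_le_mul_of_nonneg_left hm2 (sq_nonneg C)
      _ = C ^ 2 * ⟪v, LK v⟫ := by rw [hquad]
  · have h0 : LK v = 0 := by rw [hLK]; exact integral_undef hInt
    simp [h0]

/-- **Lemma `lemma:LR_g_t`**: bound on `‖L_K g_{t-1}‖²_H` for the deterministic sequence
`g_t`.

Setting: `H` is an RKHS with feature map `k` and kernel bound `C`; `Pα = (1-α)P + αQ`;
`rα ∈ H` (with `0 ≤ rα ≤ 1/α` pointwise) is the relative likelihood ratio; `LK` is the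
covariance operator, `L_K f = E_{Pα}[f(y) K(y,·)]`.  With `η_t = a/(t+t₀)^θ` and
`λ_t = b/(t+t₀)^{1-θ}`, the deterministic sequence is `g₀ = -rα`,
`g_t = [Id - η_t(L_K + λ_t Id)] g_{t-1} - η_t λ_t rα`.

Assuming `t₀^θ ≥ a(C² + b)`, every term of the sequence satisfies
`‖L_K g_{t-1}‖²_H ≤ C²/α²` (stated below as `‖L_K (g t)‖² ≤ C²/α²` for all `t : ℕ`,
which is the same claim re-indexed). -/
theorem covariance_of_g_bound
    {X : Type*} [MeasurableSpace X]
    {H : Type*} [NormedAddCommGroup H] [InnerProductSpace ℝ H] [CompleteSpace H]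
    (k : X → H) (C : ℝ) (hCpos : 0 < C) (hC : ∀ x : X, ‖k x‖ ≤ C)
    (P Q : Measure X) [IsProbabilityMeasure P] [IsProbabilityMeasure Q]
    (α : ℝ) (hα0 : 0 < α) (hα1 : α < 1)
    (Pα : Measure X) (hPα : Pα = ENNReal.ofReal (1 - α) • P + ENNReal.ofReal α • Q)
    (rα : H) (hrα0 : ∀ y : X, 0 ≤ ⟪rα, k y⟫) (hrα : ∀ y : X, ⟪rα, k y⟫ ≤ 1 / α)
    (LK : H →L[ℝ] H) (hLK : ∀ f : H, LK f = ∫ y, ⟪f, k y⟫ • k y ∂Pα)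
    (a b θ t₀ : ℝ) (ha : 0 < a) (hb : 0 < b) (ht₀pos : 0 < t₀)
    (hθ0 : 0 ≤ θ) (hθ1 : θ ≤ 1)
    (ht₀θ : a * (C ^ 2 + b) ≤ t₀ ^ θ)
    (η lam : ℕ → ℝ)
    (hη : ∀ t : ℕ, η t = a / ((t : ℝ) + t₀) ^ θ)
    (hlam : ∀ t : ℕ, lam t = b / ((t : ℝ) + t₀) ^ (1 - θ))
    (g : ℕ → H) (hg0 : g 0 = -rα)
    (hg : ∀ t : ℕ, g (t + 1)
        = g t - η (t + 1) • (LK (g t) + lam (t + 1) • g t) - (η (t + 1) * lam (t + 1)) • rα) :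
    ∀ t : ℕ, ‖LK (g t)‖ ^ 2 ≤ C ^ 2 / α ^ 2 := by
  have hprob : IsProbabilityMeasure Pα := by
    constructor
    rw [hPα]
    simp only [Measure.add_apply, Measure.smul_apply, measure_univ, smul_eq_mul, mul_one]
    rw [← ENNReal.ofReal_add (by linarith) hα0.le]
    norm_num
  have keyA : ∀ v : H, ‖LK v‖ ^ 2 ≤ C ^ 2 * ⟪v, LK v⟫ :=
    keyA_aux_g Pα k C hC LK hLK
  -- bound on ‖LK rα‖
  have keyC : ‖LK rα‖ ≤ C / α := by
    by_cases hInt : Integrable (fun y => ⟪rα, k y⟫ • k y) Pα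
    · rw [hLK]
      calc ‖∫ y, ⟪rα, k y⟫ • k y ∂Pα‖ ≤ ∫ y, ‖⟪rα, k y⟫ • k y‖ ∂Pα :=
            norm_integral_le_integral_norm _
        _ ≤ ∫ _y, C / α ∂Pα := by
            refine integral_mono hInt.norm (integrable_const _) fun y => ?_
            rw [norm_smul, Real.norm_eq_abs, abs_of_nonneg (hrα0 y)]
            calc ⟪rα, k y⟫ * ‖k y‖ ≤ (1 / α) * C :=
                  mul_le_mul (hrα y) (hC y) (norm_nonneg _) (by positivity)
              _ = C / α := by field_simp
        _ = C / α := by simp [measure_univ]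
    · rw [hLK, integral_undef hInt]
      simp
      positivity
  -- main induction
  have main : ∀ t : ℕ, ‖LK (g t)‖ ≤ C / α := by
    intro t
    induction t with
    | zero =>
      rw [hg0, map_neg, norm_neg]; exact keyC
    | succ t ih =>
      set s : ℝ := (t : ℝ) + 1 + t₀ with hs
      have hs0 : (0 : ℝ) < s := by positivity
      have hs1 : (1 : ℝ) ≤ s := by
        have : (0 : ℝ) ≤ (t : ℝ) := Nat.cast_nonneg t
        linarith
      have hst₀ : t₀ ≤ s := by
        have : (0 : ℝ) ≤ (t : ℝ) := Nat.cast_nonneg t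
        linarith
      have hsθ : (0 : ℝ) < s ^ θ := Real.rpow_pos_of_pos hs0 θ
      have hsθ' : (0 : ℝ) < s ^ (1 - θ) := Real.rpow_pos_of_pos hs0 (1 - θ)
      have hηt : η (t + 1) = a / s ^ θ := by rw [hη, hs]; push_cast; ring_nf
      have hlamt : lam (t + 1) = b / s ^ (1 - θ) := by rw [hlam, hs]; push_cast; ring_nf
      have hη0 : 0 < η (t + 1) := by rw [hηt]; positivity
      have hl0 : 0 < lam (t + 1) := by rw [hlamt]; positivity
      have hmul : s ^ θ * s ^ (1 - θ) = s := by
        rw [← Real.rpow_add hs0]; norm_num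
      have hel : η (t + 1) * lam (t + 1) = a * b / s := by
        rw [hηt, hlamt, div_mul_div_comm, hmul]
      have hsle : s ^ θ ≤ s := by
        have h := Real.rpow_le_rpow_of_exponent_le hs1 hθ1
        rwa [Real.rpow_one] at h
      have ht₀s : t₀ ^ θ ≤ s ^ θ := Real.rpow_le_rpow ht₀pos.le hst₀ hθ0
      have h1 : η (t + 1) * C ^ 2 + η (t + 1) * lam (t + 1) ≤ 1 := by
        rw [hel, hηt]
        have h2 : a * b / s ≤ a * b / s ^ θ :=
          div_le_div_of_nonneg_left (by positivity) hsθ hsle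
        have h3 : a / s ^ θ * C ^ 2 + a * b / s ^ θ = a * (C ^ 2 + b) / s ^ θ := by ring
        have h4 : a * (C ^ 2 + b) / s ^ θ ≤ 1 := by
          rw [div_le_one hsθ]
          exact le_trans ht₀θ ht₀s
        calc a / s ^ θ * C ^ 2 + a * b / s ≤ a / s ^ θ * C ^ 2 + a * b / s ^ θ := by linarith
          _ = a * (C ^ 2 + b) / s ^ θ := h3
          _ ≤ 1 := h4
      have hc0 : 0 ≤ 1 - η (t + 1) * lam (t + 1) := by
        nlinarith [mul_nonneg hη0.le (sq_nonneg C)]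
      have hrec : LK (g (t + 1))
          = (LK (g t) - η (t + 1) • (LK (LK (g t)) + lam (t + 1) • LK (g t)))
            - (η (t + 1) * lam (t + 1)) • LK rα := by
        rw [hg t]
        simp only [map_sub, map_add, ContinuousLinearMap.map_smul]
      rw [hrec]
      have hcontr : ‖LK (g t) - η (t + 1) • (LK (LK (g t)) + lam (t + 1) • LK (g t))‖
          ≤ (1 - η (t + 1) * lam (t + 1)) * ‖LK (g t)‖ :=
        contract_aux_g LK C hCpos keyA _ _ hη0 h1 (LK (g t))
      calc ‖(LK (g t) - η (t + 1) • (LK (LK (g t)) + lam (t + 1) • LK (g t)))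
            - (η (t + 1) * lam (t + 1)) • LK rα‖
          ≤ ‖LK (g t) - η (t + 1) • (LK (LK (g t)) + lam (t + 1) • LK (g t))‖
            + ‖(η (t + 1) * lam (t + 1)) • LK rα‖ := norm_sub_le _ _
        _ ≤ (1 - η (t + 1) * lam (t + 1)) * ‖LK (g t)‖
            + (η (t + 1) * lam (t + 1)) * (C / α) := by
            refine add_le_add hcontr ?_
            rw [norm_smul, Real.norm_eq_abs, abs_of_pos (mul_pos hη0 hl0)]
            exact mul_le_mul_of_nonneg_left keyC (mul_pos hη0 hl0).le
        _ ≤ (1 - η (t + 1) * lam (t + 1)) * (C / α)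
            + (η (t + 1) * lam (t + 1)) * (C / α) := by
            refine add_le_add (mul_le_mul_of_nonneg_left ih hc0) le_rfl
        _ = C / α := by ring
  intro t
  have h := main t
  calc ‖LK (g t)‖ ^ 2 ≤ (C / α) ^ 2 := pow_le_pow_left₀ (norm_nonneg _) h 2
    _ = C ^ 2 / α ^ 2 := div_pow C α 2
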